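/- Conditional independence preservation, general interactive case: suppose random variables (A, B, C) on finite sets satisfy A ⊥ B | C. Let F be an interactive communication: F = (F₁,…,F_r) with F_i a deterministic function of (A, F^{i−1}) for odd i and of (B, F^{i−1}) for even i. Then A ⊥ B | (C, F), i.e., I(A ∧ B | C, F) = 0. -/
import Mathlib


open Finset

/-- Conditional mutual information `I(A ∧ B | C)` of a joint pmf `p` on `A × B × C`
(natural log, with `0 log(0/0) = 0` conventions). -/
noncomputable def condMI {A B C : Type*} [Fintype A] [Fintype B] [Fintype C]
    (p : A → B → C → ℝ) : ℝ :=
  ∑ a, ∑ b, ∑ c, if p a b c = 0 then 0 else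
    p a b c * Real.log ((p a b c * ∑ a', ∑ b', p a' b' c) /
      ((∑ b', p a b' c) * (∑ a', p a' b c)))


lemma gibbs_term_ge {w q : ℝ} (hw : 0 ≤ w) (hq : 0 ≤ q) (hsupp : w ≠ 0 → q ≠ 0) :
    w - q ≤ (if w = 0 then 0 else w * Real.log (w / q)) := by
  by_cases h : w = 0
  · simp [h, hq]
  · have hw' : 0 < w := lt_of_le_of_ne hw (Ne.symm h)
    have hq' : 0 < q := lt_of_le_of_ne hq (Ne.symm (hsupp h))
    rw [if_neg h]
    have h1 := Real.log_le_sub_one_of_pos (show (0:ℝ) < q / w by positivity)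
    have h2 : Real.log (q / w) = - Real.log (w / q) := by
      rw [Real.log_div hq'.ne' hw'.ne', Real.log_div hw'.ne' hq'.ne']; ring
    rw [h2] at h1
    have h3 : 1 - q / w ≤ Real.log (w / q) := by linarith
    have h4 : w * (1 - q / w) = w - q := by field_simp
    nlinarith [mul_le_mul_of_nonneg_left h3 hw]

lemma gibbs_term_gt {w q : ℝ} (hw : 0 < w) (hq : 0 < q) (hne : w ≠ q) :
    w - q < w * Real.log (w / q) := by
  have h1 := Real.log_lt_sub_one_of_pos (show (0:ℝ) < q / w by positivity)
      (by intro hc; apply hne; field_simp at hc; linarith)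
  have h2 : Real.log (q / w) = - Real.log (w / q) := by
    rw [Real.log_div hq.ne' hw.ne', Real.log_div hw.ne' hq.ne']; ring
  rw [h2] at h1
  have h3 : 1 - q / w < Real.log (w / q) := by linarith
  have h4 : w * (1 - q / w) = w - q := by field_simp
  nlinarith [mul_lt_mul_of_pos_left h3 hw]

lemma gibbs_nonneg {ι : Type*} [Fintype ι] (w q : ι → ℝ)
    (hw : ∀ i, 0 ≤ w i) (hq : ∀ i, 0 ≤ q i)
    (hsum : ∑ i, w i = ∑ i, q i)
    (hsupp : ∀ i, w i ≠ 0 → q i ≠ 0) :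
    0 ≤ ∑ i, (if w i = 0 then 0 else w i * Real.log (w i / q i)) := by
  have h : ∑ i, (w i - q i) ≤ ∑ i, (if w i = 0 then 0 else w i * Real.log (w i / q i)) :=
    Finset.sum_le_sum fun i _ => gibbs_term_ge (hw i) (hq i) (hsupp i)
  rw [Finset.sum_sub_distrib, hsum] at h
  linarith

lemma gibbs_eq {ι : Type*} [Fintype ι] (w q : ι → ℝ)
    (hw : ∀ i, 0 ≤ w i) (hq : ∀ i, 0 ≤ q i)
    (hsum : ∑ i, w i = ∑ i, q i)
    (hsupp : ∀ i, w i ≠ 0 → q i ≠ 0)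
    (hzero : ∑ i, (if w i = 0 then 0 else w i * Real.log (w i / q i)) = 0) :
    ∀ i, w i = q i := by
  by_contra hc
  push_neg at hc
  obtain ⟨i₀, hi₀⟩ := hc
  have hstrict : w i₀ - q i₀ < (if w i₀ = 0 then 0 else w i₀ * Real.log (w i₀ / q i₀)) := by
    by_cases h : w i₀ = 0
    · rw [if_pos h, h]
      have : q i₀ ≠ 0 := by intro hc'; exact hi₀ (by rw [h, hc'])
      have := lt_of_le_of_ne (hq i₀) (Ne.symm this)
      linarith
    · rw [if_neg h]
      exact gibbs_term_gt (lt_of_le_of_ne (hw i₀) (Ne.symm h))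
        (lt_of_le_of_ne (hq i₀) (Ne.symm (hsupp i₀ h))) hi₀
  have h : ∑ i, (w i - q i) < ∑ i, (if w i = 0 then 0 else w i * Real.log (w i / q i)) :=
    Finset.sum_lt_sum (fun i _ => gibbs_term_ge (hw i) (hq i) (hsupp i))
      ⟨i₀, Finset.mem_univ _, hstrict⟩
  rw [Finset.sum_sub_distrib, hsum, hzero] at h
  linarith

lemma condMI_pointwise {A B C : Type*} [Fintype A] [Fintype B] [Fintype C]
    (p : A → B → C → ℝ) (hp0 : ∀ a b c, 0 ≤ p a b c) (hCI : condMI p = 0) :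
    ∀ a b c, p a b c * (∑ a', ∑ b', p a' b' c) = (∑ b', p a b' c) * (∑ a', p a' b c) := by
  classical
  -- notation
  set pc : C → ℝ := fun c => ∑ a', ∑ b', p a' b' c with hpc_def
  set pA : A → C → ℝ := fun a c => ∑ b', p a b' c with hpA_def
  set pB : B → C → ℝ := fun b c => ∑ a', p a' b c with hpB_def
  have hpc_nonneg : ∀ c, 0 ≤ pc c := fun c =>
    Finset.sum_nonneg fun a _ => Finset.sum_nonneg fun b _ => hp0 a b c
  have hpA_nonneg : ∀ a c, 0 ≤ pA a c := fun a c =>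
    Finset.sum_nonneg fun b _ => hp0 a b c
  have hpB_nonneg : ∀ b c, 0 ≤ pB b c := fun b c =>
    Finset.sum_nonneg fun a _ => hp0 a b c
  have hle_pA : ∀ a b c, p a b c ≤ pA a c := fun a b c =>
    Finset.single_le_sum (fun b' _ => hp0 a b' c) (Finset.mem_univ b)
  have hle_pB : ∀ a b c, p a b c ≤ pB b c := fun a b c =>
    Finset.single_le_sum (fun a' _ => hp0 a' b c) (Finset.mem_univ a)
  have hpA_le_pc : ∀ a c, pA a c ≤ pc c := fun a c =>
    Finset.single_le_sum (f := fun a' => pA a' c) (fun a' _ => hpA_nonneg a' c) (Finset.mem_univ a)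
  have hpcA : ∀ c, ∑ a, pA a c = pc c := fun c => rfl
  have hpcB : ∀ c, ∑ b, pB b c = pc c := fun c => (Finset.sum_comm ..)
  -- case pc c = 0 : everything vanishes
  have hzero_case : ∀ c, pc c = 0 → ∀ a b, p a b c = 0 := by
    intro c hc a b
    have h1 : pA a c = 0 := le_antisymm (hc ▸ hpA_le_pc a c) (hpA_nonneg a c)
    exact le_antisymm (h1 ▸ hle_pA a b c) (hp0 a b c)
  -- per-c term as a gibbs sum
  set w : C → A × B → ℝ := fun c x => p x.1 x.2 c with hw_def
  set qq : C → A × B → ℝ := fun c x => pA x.1 c * pB x.2 c / pc c with hq_def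
  have hw_nonneg : ∀ c x, 0 ≤ w c x := fun c x => hp0 x.1 x.2 c
  have hq_nonneg : ∀ c x, 0 ≤ qq c x := fun c x => by
    have := hpA_nonneg x.1 c; have := hpB_nonneg x.2 c; have := hpc_nonneg c
    positivity
  have hsupp : ∀ c x, w c x ≠ 0 → qq c x ≠ 0 := by
    intro c x hx
    have hwpos : 0 < w c x := lt_of_le_of_ne (hw_nonneg c x) (Ne.symm hx)
    have h1 : 0 < pA x.1 c := lt_of_lt_of_le hwpos (hle_pA x.1 x.2 c)
    have h2 : 0 < pB x.2 c := lt_of_lt_of_le hwpos (hle_pB x.1 x.2 c)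
    have h3 : 0 < pc c := lt_of_lt_of_le h1 (hpA_le_pc x.1 c)
    positivity
  have hsum : ∀ c, ∑ x, w c x = ∑ x, qq c x := by
    intro c
    by_cases hc : pc c = 0
    · have h1 : ∑ x : A × B, w c x = 0 := by
        apply Finset.sum_eq_zero; intro x _; exact hzero_case c hc x.1 x.2
      have h2 : ∑ x : A × B, qq c x = 0 := by
        apply Finset.sum_eq_zero; intro x _
        simp only [hq_def, hc, div_zero]
      rw [h1, h2]
    · have h1 : ∑ x : A × B, w c x = pc c := by
        rw [Fintype.sum_prod_type]
      have h2 : ∑ x : A × B, qq c x = pc c := by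
        rw [Fintype.sum_prod_type]
        have e : ∀ a : A, ∑ b : B, qq c (a, b) = pA a c := by
          intro a
          show (∑ b : B, pA a c * pB b c / pc c) = pA a c
          rw [← Finset.sum_div, ← Finset.mul_sum, hpcB c]
          field_simp
        calc (∑ a : A, ∑ b : B, qq c (a, b))
            = ∑ a : A, pA a c := Finset.sum_congr rfl fun a _ => e a
          _ = pc c := hpcA c
      rw [h1, h2]
  -- rewrite condMI as sum over c of gibbs sums
  have hrw : condMI p = ∑ c, ∑ x : A × B,
      (if w c x = 0 then 0 else w c x * Real.log (w c x / qq c x)) := by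
    rw [condMI]
    rw [show (∑ a, ∑ b, ∑ c, if p a b c = 0 then 0 else
        p a b c * Real.log ((p a b c * ∑ a', ∑ b', p a' b' c) /
          ((∑ b', p a b' c) * (∑ a', p a' b c)))) = ∑ a, ∑ c, ∑ b, if p a b c = 0 then 0 else
        p a b c * Real.log ((p a b c * ∑ a', ∑ b', p a' b' c) /
          ((∑ b', p a b' c) * (∑ a', p a' b c))) from
      Finset.sum_congr rfl fun a _ => Finset.sum_comm, Finset.sum_comm]
    apply Finset.sum_congr rfl
    intro c _
    rw [Fintype.sum_prod_type]
    apply Finset.sum_congr rfl; intro a _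
    apply Finset.sum_congr rfl; intro b _
    by_cases h : p a b c = 0
    · simp [hw_def, h]
    · rw [if_neg h, if_neg h]
      congr 1
      have hwpos : 0 < p a b c := lt_of_le_of_ne (hp0 a b c) (Ne.symm h)
      have h1 : 0 < pA a c := lt_of_lt_of_le hwpos (hle_pA a b c)
      have h3 : 0 < pc c := lt_of_lt_of_le h1 (hpA_le_pc a c)
      congr 1
      show p a b c * pc c / (pA a c * pB b c) = p a b c / (pA a c * pB b c / pc c)
      rw [div_div_eq_mul_div]
  have hterm_nonneg : ∀ c, 0 ≤ ∑ x : A × B,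
      (if w c x = 0 then 0 else w c x * Real.log (w c x / qq c x)) := fun c =>
    gibbs_nonneg (w c) (qq c) (hw_nonneg c) (hq_nonneg c) (hsum c) (hsupp c)
  have hall : ∀ c, ∑ x : A × B,
      (if w c x = 0 then 0 else w c x * Real.log (w c x / qq c x)) = 0 := by
    have := hCI
    rw [hrw] at this
    exact fun c => (Finset.sum_eq_zero_iff_of_nonneg
      (fun c _ => hterm_nonneg c)).mp this c (Finset.mem_univ c)
  intro a b c
  have heq := gibbs_eq (w c) (qq c) (hw_nonneg c) (hq_nonneg c) (hsum c) (hsupp c) (hall c) (a, b)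
  by_cases hc : pc c = 0
  · have := hzero_case c hc
    show p a b c * pc c = pA a c * pB b c
    rw [hc, mul_zero]
    have h1 : pA a c = 0 := Finset.sum_eq_zero fun b' _ => this a b'
    rw [h1, zero_mul]
  · show p a b c * pc c = pA a c * pB b c
    have : p a b c = pA a c * pB b c / pc c := heq
    rw [this]; field_simp


lemma transcript_cross {A B M : Type*} {r : ℕ} (t : A → B → Fin r → M)
    (hInteractive : ∀ i : Fin r,
      (i.val % 2 = 0 →
        ∃ g : A → (Fin r → M) → M,
          (∀ a h₁ h₂, (∀ j : Fin r, j < i → h₁ j = h₂ j) → g a h₁ = g a h₂) ∧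
          ∀ a b, t a b i = g a (t a b)) ∧
      (i.val % 2 = 1 →
        ∃ g : B → (Fin r → M) → M,
          (∀ b h₁ h₂, (∀ j : Fin r, j < i → h₁ j = h₂ j) → g b h₁ = g b h₂) ∧
          ∀ a b, t a b i = g b (t a b)))
    (a a' : A) (b b' : B) (h : t a b = t a' b') :
    t a b' = t a b := by
  have key : ∀ n, ∀ j : Fin r, j.val < n → t a b' j = t a b j := by
    intro n
    induction n with
    | zero => intro j hj; omega
    | succ n ih =>
      intro j hj
      rcases Nat.lt_succ_iff_lt_or_eq.mp hj with h' | h'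
      · exact ih j h'
      · rcases Nat.even_or_odd j.val with he | ho
        · obtain ⟨g, hg, hgt⟩ := (hInteractive j).1 (Nat.even_iff.mp he)
          rw [hgt a b', hgt a b]
          exact hg a _ _ fun k hk => ih k (by
            have : k.val < j.val := hk
            omega)
        · obtain ⟨g, hg, hgt⟩ := (hInteractive j).2 (Nat.odd_iff.mp ho)
          have e1 : g b' (t a b') = g b' (t a' b') := by
            apply hg
            intro k hk
            have hk' : k.val < j.val := hk
            rw [ih k (by omega), h]
          rw [hgt a b', e1, ← hgt a' b', ← h]
  funext j
  exact key (j.val + 1) j (Nat.lt_succ_self _)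

/-- Conditional independence is preserved under general interactive communication:
if `A ⊥ B | C` and `F = (F₁, …, F_r)` is an interactive transcript, where `F_i`
is a deterministic function of `(A, F^{i-1})` for odd `i` (0-based even indices)
and of `(B, F^{i-1})` for even `i`, then `I(A ∧ B | C, F) = 0`. -/
theorem interactive_communication_preserves_CI
    {A B C M : Type*} [Fintype A] [Fintype B] [Fintype C] [Fintype M]
    [DecidableEq M] {r : ℕ}
    (p : A → B → C → ℝ)
    (hp0 : ∀ a b c, 0 ≤ p a b c) (hp1 : ∑ a, ∑ b, ∑ c, p a b c = 1)
    (hCI : condMI p = 0)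
    (t : A → B → Fin r → M)
    (hInteractive : ∀ i : Fin r,
      (i.val % 2 = 0 →
        ∃ g : A → (Fin r → M) → M,
          (∀ a h₁ h₂, (∀ j : Fin r, j < i → h₁ j = h₂ j) → g a h₁ = g a h₂) ∧
          ∀ a b, t a b i = g a (t a b)) ∧
      (i.val % 2 = 1 →
        ∃ g : B → (Fin r → M) → M,
          (∀ b h₁ h₂, (∀ j : Fin r, j < i → h₁ j = h₂ j) → g b h₁ = g b h₂) ∧
          ∀ a b, t a b i = g b (t a b))) :
    condMI (fun (a : A) (b : B) (cf : C × (Fin r → M)) =>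
      if t a b = cf.2 then p a b cf.1 else 0) = 0 := by
  classical
  have hfac := condMI_pointwise p hp0 hCI
  rw [condMI]
  apply Finset.sum_eq_zero; intro a _
  apply Finset.sum_eq_zero; intro b _
  apply Finset.sum_eq_zero; intro cf _
  obtain ⟨c, f⟩ := cf
  simp only
  by_cases hq : (if t a b = f then p a b c else 0) = 0
  · rw [if_pos hq]
  · rw [if_neg hq]
    -- from hq : t a b = f and p a b c ≠ 0
    have htab : t a b = f := by
      by_contra hc; exact hq (if_neg hc)
    have hpne : p a b c ≠ 0 := by
      intro hc; exact hq (by rw [if_pos htab, hc])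
    have hppos : 0 < p a b c := lt_of_le_of_ne (hp0 a b c) (Ne.symm hpne)
    -- abbreviations
    set pc : ℝ := ∑ a', ∑ b', p a' b' c with hpc_def
    set S : ℝ := ∑ a', ∑ b', (if t a' b' = f then p a' b' c else 0) with hS_def
    have hpc_pos : 0 < pc := by
      calc 0 < p a b c := hppos
      _ ≤ ∑ b', p a b' c :=
        Finset.single_le_sum (fun b' _ => hp0 a b' c) (Finset.mem_univ b)
      _ ≤ pc := Finset.single_le_sum (f := fun a' => ∑ b', p a' b' c)
          (fun a' _ => Finset.sum_nonneg fun b' _ => hp0 a' b' c) (Finset.mem_univ a)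
    have hqnn : ∀ (a' : A) (b' : B), 0 ≤ (if t a' b' = f then p a' b' c else 0) := by
      intro a' b'; split
      · exact hp0 a' b' c
      · exact le_rfl
    have hS_pos : 0 < S := by
      calc 0 < p a b c := hppos
      _ = (if t a b = f then p a b c else 0) := (if_pos htab).symm
      _ ≤ ∑ b', (if t a b' = f then p a b' c else 0) :=
        Finset.single_le_sum (f := fun b' => if t a b' = f then p a b' c else 0)
          (fun b' _ => hqnn a b') (Finset.mem_univ b)
      _ ≤ S := Finset.single_le_sum
          (f := fun a' => ∑ b', (if t a' b' = f then p a' b' c else 0))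
          (fun a' _ => Finset.sum_nonneg fun b' _ => hqnn a' b') (Finset.mem_univ a)
    -- exchange identity from conditional independence
    have hswap : ∀ (a' : A) (b' : B), p a b' c * p a' b c = p a b c * p a' b' c := by
      intro a' b'
      have e1 := hfac a b' c
      have e2 := hfac a' b c
      have e3 := hfac a b c
      have e4 := hfac a' b' c
      apply mul_right_cancel₀ (show pc * pc ≠ 0 by positivity)
      calc p a b' c * p a' b c * (pc * pc)
          = (p a b' c * pc) * (p a' b c * pc) := by ring
        _ = ((∑ b'', p a b'' c) * (∑ a'', p a'' b' c)) *
            ((∑ b'', p a' b'' c) * (∑ a'', p a'' b c)) := by rw [e1, e2]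
        _ = ((∑ b'', p a b'' c) * (∑ a'', p a'' b c)) *
            ((∑ b'', p a' b'' c) * (∑ a'', p a'' b' c)) := by ring
        _ = (p a b c * pc) * (p a' b' c * pc) := by rw [e3, e4]
        _ = p a b c * p a' b' c * (pc * pc) := by ring
    -- rectangle property
    have hcross := transcript_cross t hInteractive
    have hrect : ∀ (a' : A) (b' : B),
        ((t a b' = f ∧ t a' b = f) ↔ t a' b' = f) := by
      intro a' b'
      constructor
      · rintro ⟨h1, h2⟩
        have h3 := hcross a' a b b' (h2.trans h1.symm)
        rw [h3]; exact h2
      · intro h1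
        refine ⟨?_, ?_⟩
        · have h3 := hcross a a' b b' (htab.trans h1.symm)
          rw [h3]; exact htab
        · have h3 := hcross a' a b' b (h1.trans htab.symm)
          rw [h3]; exact h1
    -- denominator equals p a b c * S
    have hden : (∑ b', (if t a b' = f then p a b' c else 0)) *
        (∑ a', (if t a' b = f then p a' b c else 0)) = p a b c * S := by
      rw [Finset.sum_mul_sum, hS_def, Finset.mul_sum, Finset.sum_comm]
      apply Finset.sum_congr rfl; intro a' _
      rw [Finset.mul_sum]
      apply Finset.sum_congr rfl; intro b' _
      by_cases h1 : t a' b' = f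
      · have h2 := (hrect a' b').mpr h1
        rw [if_pos h2.1, if_pos h2.2, if_pos h1, hswap a' b']
      · rw [if_neg h1, mul_zero]
        by_cases h3 : t a b' = f
        · have h4 : ¬ t a' b = f := fun h4 => h1 ((hrect a' b').mp ⟨h3, h4⟩)
          rw [if_neg h4, mul_zero]
        · rw [if_neg h3, zero_mul]
    have hqeq : (if t a b = f then p a b c else 0) = p a b c := if_pos htab
    rw [hqeq, hden, div_self (mul_pos hppos hS_pos).ne', Real.log_one, mul_zero]
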